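/- The function z ↦ ψ(z)/Γ(z), a priori defined on ℂ minus the nonpositive integers, extends to an entire function F on all of ℂ; this extension satisfies F(0) = −1, and the zero set of F coincides with the zero set of ψ (in particular F has no zeros at the nonpositive integers). -/

import Mathlib

open Complex Finset

private lemma inv_Gamma_eq (n : ℕ) (z : ℂ) :
    (Complex.Gamma z)⁻¹ =
      (∏ k ∈ Finset.range (n + 1), (z + (k : ℂ))) * (Complex.Gamma (z + (n + 1 : ℕ)))⁻¹ := by
  induction n with
  | zero => simpa using Complex.one_div_Gamma_eq_self_mul_one_div_Gamma_add_one z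
  | succ n ih =>
    rw [ih, Complex.one_div_Gamma_eq_self_mul_one_div_Gamma_add_one (z + (n + 1 : ℕ))]
    have h1 : (z + ((n + 1 : ℕ) : ℂ) + 1) = z + ((n + 1 + 1 : ℕ) : ℂ) := by push_cast; ring
    rw [h1]
    conv_rhs => rw [Finset.prod_range_succ]
    rw [Finset.prod_range_succ]
    ring

private lemma deriv_inv_Gamma_neg_nat (n : ℕ) :
    deriv (fun w : ℂ => (Complex.Gamma w)⁻¹) (-(n : ℂ)) =
      ∏ k ∈ Finset.range n, (-(n : ℂ) + (k : ℂ)) := by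
  set h : ℂ → ℂ := fun w => (∏ k ∈ Finset.range n, (w + (k : ℂ))) *
      (Complex.Gamma (w + (n + 1 : ℕ)))⁻¹ with hh
  have hfun : (fun w : ℂ => (Complex.Gamma w)⁻¹) = fun w => (w + (n : ℂ)) * h w := by
    funext w
    rw [inv_Gamma_eq n w, Finset.prod_range_succ, hh]
    ring
  have hdh : DifferentiableAt ℂ h (-(n : ℂ)) := by
    apply DifferentiableAt.mul
    · exact DifferentiableAt.fun_finsetProd fun k _ => differentiableAt_id.add_const _
    · exact (Complex.differentiable_one_div_Gamma _).comp _
        (differentiableAt_id.add_const _)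
  have hd1 : DifferentiableAt ℂ (fun w : ℂ => w + (n : ℂ)) (-(n : ℂ)) :=
    differentiableAt_id.add_const _
  rw [hfun, deriv_fun_mul hd1 hdh]
  have h1 : deriv (fun w : ℂ => w + (n : ℂ)) (-(n : ℂ)) = 1 := by
    simp [deriv_add_const]
  have h2 : (-(n : ℂ) + (n : ℂ)) = 0 := by ring
  rw [h1, h2, zero_mul, add_zero, one_mul, hh]
  show (∏ k ∈ Finset.range n, (-(n : ℂ) + (k : ℂ))) *
      (Complex.Gamma (-(n : ℂ) + ((n + 1 : ℕ) : ℂ)))⁻¹ = _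
  have h3 : (-(n : ℂ) + ((n + 1 : ℕ) : ℂ)) = 1 := by push_cast; ring
  rw [h3, Complex.Gamma_one, inv_one, mul_one]

/-- The function `z ↦ ψ(z)/Γ(z)` (with `ψ = Γ'/Γ` the Digamma function), a priori defined
off the nonpositive integers, extends to an entire function `F`; the extension satisfies
`F 0 = -1` and its zero set coincides with the zero set of `ψ` (in particular `F` has no
zeros at the nonpositive integers). -/
theorem digamma_div_Gamma_extends_entire :
    ∃ F : ℂ → ℂ, Differentiable ℂ F ∧
      (∀ z : ℂ, (∀ n : ℕ, z ≠ -(n : ℂ)) →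
        F z = logDeriv Complex.Gamma z / Complex.Gamma z) ∧
      F 0 = -1 ∧
      (∀ z : ℂ, F z = 0 ↔ ((∀ n : ℕ, z ≠ -(n : ℂ)) ∧ logDeriv Complex.Gamma z = 0)) := by
  refine ⟨fun z => -deriv (fun w : ℂ => (Complex.Gamma w)⁻¹) z, ?_, ?_, ?_, ?_⟩
  · have hA : AnalyticOnNhd ℂ (fun w : ℂ => (Complex.Gamma w)⁻¹) Set.univ :=
      Complex.differentiable_one_div_Gamma.differentiableOn.analyticOnNhd isOpen_univ
    exact fun z => ((hA.deriv z (Set.mem_univ z)).differentiableAt).neg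
  · intro z hz
    have hΓ : Complex.Gamma z ≠ 0 := Complex.Gamma_ne_zero hz
    have hd : DifferentiableAt ℂ Complex.Gamma z := Complex.differentiableAt_Gamma z hz
    show -deriv (fun w : ℂ => (Complex.Gamma w)⁻¹) z = _
    rw [deriv_fun_inv'' hd hΓ, logDeriv, Pi.div_apply, div_div, neg_div, neg_neg, sq]
  · show -deriv (fun w : ℂ => (Complex.Gamma w)⁻¹) 0 = -1
    have := deriv_inv_Gamma_neg_nat 0
    simp only [Nat.cast_zero, neg_zero, Finset.range_zero, Finset.prod_empty] at this
    rw [this]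
  · intro z
    show -deriv (fun w : ℂ => (Complex.Gamma w)⁻¹) z = 0 ↔ _
    by_cases hz : ∀ n : ℕ, z ≠ -(n : ℂ)
    · have hΓ : Complex.Gamma z ≠ 0 := Complex.Gamma_ne_zero hz
      have hd : DifferentiableAt ℂ Complex.Gamma z := Complex.differentiableAt_Gamma z hz
      rw [deriv_fun_inv'' hd hΓ]
      constructor
      · intro h
        refine ⟨hz, ?_⟩
        have hder : deriv Complex.Gamma z = 0 := by
          have h2 : (Complex.Gamma z) ^ 2 ≠ 0 := pow_ne_zero _ hΓ
          field_simp at h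
          simpa using h
        simp [logDeriv, hder]
      · rintro ⟨-, h⟩
        have hder : deriv Complex.Gamma z = 0 := by
          rw [logDeriv, Pi.div_apply, div_eq_zero_iff] at h
          tauto
        simp [hder]
    · push_neg at hz
      obtain ⟨n, rfl⟩ := hz
      rw [deriv_inv_Gamma_neg_nat n]
      constructor
      · intro h
        exfalso
        rw [neg_eq_zero, Finset.prod_eq_zero_iff] at h
        obtain ⟨k, hk, hk0⟩ := h
        have hkn : (k : ℂ) = (n : ℂ) := by linear_combination hk0
        have hkn' : k = n := Nat.cast_injective hkn
        exact (Finset.mem_range.mp hk).ne hkn'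
      · rintro ⟨h, -⟩
        exact absurd rfl (h n)
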